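/- In the setting of the preceding proposition, assume in addition that ξ_{n+1} - ξₙ ∈ Range(A*) for all n, and let x† be the unique solution of Ax = y in dom(Θ) minimizing D_{ξ₀}Θ(·, x₀) over all solutions. Then the limit x* equals x†. -/

import Mathlib

open scoped InnerProductSpace

/-- Under hypotheses (i)-(iv) of the proposition, if in addition
`ξ_{n+1} - ξₙ ∈ Range(A*)` for all `n` and `x†` is the solution of `Ax = y` in `dom Θ`
minimizing `D_{ξ₀}Θ(·, x₀)`, then any limit `x*` (solution in `dom Θ` with
`D_{ξₙ}Θ(x*, xₙ) → 0`) equals `x†`. -/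
theorem bregman_limit_is_minimum_norm_solution
    {X Y : Type*} [NormedAddCommGroup X] [InnerProductSpace ℝ X] [CompleteSpace X]
    [NormedAddCommGroup Y] [InnerProductSpace ℝ Y] [CompleteSpace Y]
    (Θ : X → EReal) (c₀ : ℝ) (hc₀ : 0 < c₀)
    (hproper : (∀ z, Θ z ≠ ⊥) ∧ ∃ z, Θ z ≠ ⊤)
    (hlsc : LowerSemicontinuous Θ)
    (hsc : ∀ (z x : X) (s : ℝ), 0 ≤ s → s ≤ 1 →
      Θ (s • z + (1 - s) • x) + ((c₀ * s * (1 - s) * ‖z - x‖ ^ 2 : ℝ) : EReal)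
        ≤ (s : EReal) * Θ z + ((1 - s : ℝ) : EReal) * Θ x)
    (A : X →L[ℝ] Y) (y : Y)
    (hex : ∃ xhat : X, A xhat = y ∧ Θ xhat ≠ ⊤)
    (x ξ : ℕ → X)
    (hsub : ∀ n, ∀ z, Θ (x n) + ((⟪ξ n, z - x n⟫_ℝ : ℝ) : EReal) ≤ Θ z)
    (hmono : ∀ (xhat : X), A xhat = y → Θ xhat ≠ ⊤ → ∀ n,
      Θ xhat - Θ (x (n + 1)) - ((⟪ξ (n + 1), xhat - x (n + 1)⟫_ℝ : ℝ) : EReal)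
        ≤ Θ xhat - Θ (x n) - ((⟪ξ n, xhat - x n⟫_ℝ : ℝ) : EReal))
    (hres : Filter.Tendsto (fun n => ‖A (x n) - y‖) Filter.atTop (nhds 0))
    (nk : ℕ → ℕ) (hnk : StrictMono nk)
    (hsup : ∀ (xhat : X), A xhat = y → Θ xhat ≠ ⊤ → ∀ ε > (0 : ℝ), ∃ L, ∀ l, L ≤ l →
      ∀ k, l ≤ k → |⟪ξ (nk k) - ξ (nk l), x (nk k) - xhat⟫_ℝ| ≤ ε)
    (hrange : ∀ n, ξ (n + 1) - ξ n ∈ Set.range (ContinuousLinearMap.adjoint A))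
    (hξ0 : ∀ z, Θ (x 0) + ((⟪ξ 0, z - x 0⟫_ℝ : ℝ) : EReal) ≤ Θ z)
    (xdag : X) (hdag : A xdag = y ∧ Θ xdag ≠ ⊤)
    (hdagmin : ∀ (xhat : X), A xhat = y → Θ xhat ≠ ⊤ →
      Θ xdag - Θ (x 0) - ((⟪ξ 0, xdag - x 0⟫_ℝ : ℝ) : EReal)
        ≤ Θ xhat - Θ (x 0) - ((⟪ξ 0, xhat - x 0⟫_ℝ : ℝ) : EReal))
    (xstar : X) (hstar : A xstar = y ∧ Θ xstar ≠ ⊤)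
    (hstarlim : Filter.Tendsto
      (fun n => Θ xstar - Θ (x n) - ((⟪ξ n, xstar - x n⟫_ℝ : ℝ) : EReal))
      Filter.atTop (nhds (0 : EReal))) :
    xstar = xdag := by

  obtain ⟨hbot, -⟩ := hproper
  obtain ⟨hAd, hdT⟩ := hdag
  obtain ⟨hAs, hsT⟩ := hstar
  -- Θ (x n) is finite
  have hxnT : ∀ n, Θ (x n) ≠ ⊤ := by
    intro n hT
    have h := hsub n xstar
    rw [hT, EReal.top_add_coe] at h
    exact hsT (top_le_iff.mp h)
  set θ : ℕ → ℝ := fun n => (Θ (x n)).toReal with hθdef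
  have hθ : ∀ n, Θ (x n) = ((θ n : ℝ) : EReal) :=
    fun n => (EReal.coe_toReal (hxnT n) (hbot _)).symm
  set θs : ℝ := (Θ xstar).toReal with hθsdef
  have hθs : Θ xstar = ((θs : ℝ) : EReal) := (EReal.coe_toReal hsT (hbot _)).symm
  set θd : ℝ := (Θ xdag).toReal with hθddef
  have hθd : Θ xdag = ((θd : ℝ) : EReal) := (EReal.coe_toReal hdT (hbot _)).symm
  -- real version of subgradient inequality
  have hsubR : ∀ n (w : X) (θw : ℝ), Θ w = (θw : EReal) →
      θ n + ⟪ξ n, w - x n⟫_ℝ ≤ θw := by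
    intro n w θw hw
    have h := hsub n w
    rw [hθ n, hw, ← EReal.coe_add, EReal.coe_le_coe_iff] at h
    exact h
  -- real version of the limit
  have hstarlimR : Filter.Tendsto (fun n => θs - θ n - ⟪ξ n, xstar - x n⟫_ℝ)
      Filter.atTop (nhds 0) := by
    have : (fun n => Θ xstar - Θ (x n) - ((⟪ξ n, xstar - x n⟫_ℝ : ℝ) : EReal))
        = fun n => (((θs - θ n - ⟪ξ n, xstar - x n⟫_ℝ : ℝ)) : EReal) := by
      funext n
      rw [hθ n, hθs, ← EReal.coe_sub, ← EReal.coe_sub]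
    rw [this] at hstarlim
    have := EReal.tendsto_coe.mp (by rw [← EReal.coe_zero] at hstarlim; exact hstarlim)
    simpa using this
  -- inner product with ξ n - ξ 0 vanishes on differences of solutions
  have hker : ∀ n, ⟪ξ n - ξ 0, xstar - xdag⟫_ℝ = 0 := by
    intro n
    induction n with
    | zero => simp
    | succ n ih =>
      obtain ⟨v, hv⟩ := hrange n
      have hsplit : ξ (n + 1) - ξ 0 = (ξ (n + 1) - ξ n) + (ξ n - ξ 0) := by abel
      rw [hsplit, inner_add_left, ih, ← hv, ContinuousLinearMap.adjoint_inner_left]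
      simp [map_sub, hAs, hAd]
  have hker' : ∀ n, ⟪ξ n, xstar⟫_ℝ - ⟪ξ n, xdag⟫_ℝ = ⟪ξ 0, xstar⟫_ℝ - ⟪ξ 0, xdag⟫_ℝ := by
    intro n
    have h := hker n
    rw [inner_sub_left, inner_sub_right, inner_sub_right] at h
    linarith
  set Ds : ℕ → ℝ := fun n => θs - θ n - ⟪ξ n, xstar - x n⟫_ℝ with hDs
  set Dd : ℕ → ℝ := fun n => θd - θ n - ⟪ξ n, xdag - x n⟫_ℝ with hDd
  have hDdDs : ∀ n, Dd n = Ds n + (Dd 0 - Ds 0) := by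
    intro n
    have h1 := hker' n
    simp only [hDs, hDd, inner_sub_right]
    linarith
  have hDd0 : ∀ n, 0 ≤ Dd n := by
    intro n
    have := hsubR n xdag θd hθd
    simp only [hDd]
    linarith
  have hDdlim : Filter.Tendsto Dd Filter.atTop (nhds (Dd 0 - Ds 0)) := by
    have : Dd = fun n => Ds n + (Dd 0 - Ds 0) := funext hDdDs
    rw [this]
    simpa using hstarlimR.add tendsto_const_nhds
  have hC1 : Dd 0 - Ds 0 ≤ 0 := by
    have h := hdagmin xstar hAs hsT
    rw [hθ 0, hθs, hθd, ← EReal.coe_sub, ← EReal.coe_sub, ← EReal.coe_sub,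
      ← EReal.coe_sub, EReal.coe_le_coe_iff] at h
    simp only [hDs, hDd]
    linarith
  have hC0 : 0 ≤ Dd 0 - Ds 0 := le_of_tendsto_of_tendsto' tendsto_const_nhds hDdlim hDd0
  have hC : Dd 0 - Ds 0 = 0 := le_antisymm hC1 hC0
  have hDdlim0 : Filter.Tendsto Dd Filter.atTop (nhds 0) := by rwa [hC] at hDdlim
  -- midpoint
  set m : X := (1/2 : ℝ) • xstar + (1 - (1/2 : ℝ)) • xdag with hm
  have hscm := hsc xstar xdag (1/2) (by norm_num) (by norm_num)
  rw [hθs, hθd, ← EReal.coe_mul, ← EReal.coe_mul, ← EReal.coe_add, ← hm] at hscm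
  have hmT : Θ m ≠ ⊤ := by
    intro hT
    rw [hT, EReal.top_add_coe] at hscm
    exact (EReal.coe_lt_top _).not_ge hscm
  set θm : ℝ := (Θ m).toReal with hθmdef
  have hθm : Θ m = ((θm : ℝ) : EReal) := (EReal.coe_toReal hmT (hbot _)).symm
  rw [hθm, ← EReal.coe_add, EReal.coe_le_coe_iff] at hscm
  -- assemble the strong convexity estimate along the iteration
  have key : ∀ n, 0 ≤ (1/2) * Ds n + (1/2) * Dd n
      - c₀ * (1/2) * (1 - 1/2) * ‖xstar - xdag‖ ^ 2 := by
    intro n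
    have h := hsubR n m θm hθm
    have hinner : ⟪ξ n, m - x n⟫_ℝ
        = (1/2) * ⟪ξ n, xstar - x n⟫_ℝ + (1/2) * ⟪ξ n, xdag - x n⟫_ℝ := by
      have : m - x n = (1/2 : ℝ) • (xstar - x n) + (1/2 : ℝ) • (xdag - x n) := by
        rw [hm]; module
      rw [this, inner_add_right, real_inner_smul_right, real_inner_smul_right]
    simp only [hDs, hDd]
    rw [hinner] at h
    nlinarith [h, hscm]
  have hlim2 : Filter.Tendsto (fun n => (1/2) * Ds n + (1/2) * Dd n
      - c₀ * (1/2) * (1 - 1/2) * ‖xstar - xdag‖ ^ 2) Filter.atTop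
      (nhds (0 - c₀ * (1/2) * (1 - 1/2) * ‖xstar - xdag‖ ^ 2)) := by
    have h1 : Filter.Tendsto (fun n => (1/2 : ℝ) * Ds n + (1/2) * Dd n)
        Filter.atTop (nhds 0) := by
      have := (hstarlimR.const_mul (1/2 : ℝ)).add (hDdlim0.const_mul (1/2 : ℝ))
      simpa using this
    simpa using h1.sub tendsto_const_nhds
  have hfinal : (0 : ℝ) ≤ 0 - c₀ * (1/2) * (1 - 1/2) * ‖xstar - xdag‖ ^ 2 :=
    le_of_tendsto_of_tendsto' tendsto_const_nhds hlim2 key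
  have hnorm : ‖xstar - xdag‖ ^ 2 ≤ 0 := by nlinarith
  have : ‖xstar - xdag‖ = 0 := by nlinarith [norm_nonneg (xstar - xdag)]
  exact sub_eq_zero.mp (norm_eq_zero.mp this)
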